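/- With the feedback choice f = κ·Tr(ρ_d·[−iH₁, ρ]) with κ > 0, the time derivative of V(ρ, ρ_d) = Tr[ρ_d²] − Tr[ρ·ρ_d] along the coupled flow ρ' = −i[H₀ + f H₁, ρ], ρ_d' = −i[H₀, ρ_d] equals −f²/κ ≤ 0. -/

import Mathlib

open Matrix

lemma hasDerivAt_trace_mul {n : ℕ} {A B : ℝ → Matrix (Fin n) (Fin n) ℂ}
    {A' B' : Matrix (Fin n) (Fin n) ℂ} {t : ℝ}
    (hA : ∀ i j, HasDerivAt (fun s => A s i j) (A' i j) t)
    (hB : ∀ i j, HasDerivAt (fun s => B s i j) (B' i j) t) :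
    HasDerivAt (fun s => (A s * B s).trace)
      ((A' * B t).trace + (A t * B').trace) t := by
  have e : ∀ s, (A s * B s).trace = ∑ i, ∑ j, A s i j * B s j i := by
    intro s; simp [Matrix.trace, Matrix.mul_apply, Matrix.diag]
  simp only [e]
  have h := HasDerivAt.fun_sum (u := Finset.univ)
    (fun i _ => HasDerivAt.fun_sum (u := Finset.univ)
      (fun j _ => ((hA i j).fun_mul (hB j i)) : ∀ j ∈ Finset.univ, _))
  convert h using 1
  case e'_4 => rfl
  simp [Matrix.trace, Matrix.mul_apply, Matrix.diag, Finset.sum_add_distrib]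

lemma tr3 {n : ℕ} (A B C : Matrix (Fin n) (Fin n) ℂ) :
    (A * B * C).trace = (C * A * B).trace := by
  rw [trace_mul_comm, ← mul_assoc]

theorem stmt_3 {n : ℕ} (H₀ H₁ : Matrix (Fin n) (Fin n) ℂ)
    (hH₀ : H₀.IsHermitian) (hH₁ : H₁.IsHermitian)
    (κ : ℝ) (hκ : 0 < κ)
    (ρ ρd : ℝ → Matrix (Fin n) (Fin n) ℂ)
    (hρherm : ∀ t, (ρ t).IsHermitian) (hρdherm : ∀ t, (ρd t).IsHermitian)
    (f : ℝ → ℂ)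
    (hf : ∀ t, f t = (κ : ℂ) * ((ρd t) * (-Complex.I • (H₁ * ρ t - ρ t * H₁))).trace)
    (hρ : ∀ (i j : Fin n) (t : ℝ),
      HasDerivAt (fun s => ρ s i j)
        ((-Complex.I • ((H₀ + f t • H₁) * ρ t - ρ t * (H₀ + f t • H₁))) i j) t)
    (hρd : ∀ (i j : Fin n) (t : ℝ),
      HasDerivAt (fun s => ρd s i j)
        ((-Complex.I • (H₀ * ρd t - ρd t * H₀)) i j) t)
    (V : ℝ → ℂ)
    (hV : ∀ t, V t = (ρd t * ρd t).trace - (ρ t * ρd t).trace) :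
    ∀ t, HasDerivAt V (-(f t) ^ 2 / (κ : ℂ)) t ∧ (-(f t) ^ 2 / (κ : ℂ)).im = 0 ∧
      (-(f t) ^ 2 / (κ : ℂ)).re ≤ 0 := by
  intro t
  have hκ' : (κ : ℂ) ≠ 0 := by exact_mod_cast hκ.ne'
  -- reality of f t
  have him : (f t).im = 0 := by
    rw [← Complex.conj_eq_iff_im]
    rw [hf t, _root_.map_mul, Complex.conj_ofReal, starRingEnd_apply,
      ← Matrix.trace_conjTranspose]
    congr 1
    rw [Matrix.conjTranspose_mul, Matrix.conjTranspose_smul,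
      Matrix.conjTranspose_sub, Matrix.conjTranspose_mul, Matrix.conjTranspose_mul,
      (hρherm t).eq, (hρdherm t).eq, hH₁.eq, trace_mul_comm]
    simp only [star_neg, Complex.star_def, Complex.conj_I]
    congr 1
    rw [neg_neg]
    simp only [smul_sub, neg_smul]
    abel
  obtain ⟨r, hr⟩ : ∃ r : ℝ, f t = (r : ℂ) :=
    ⟨(f t).re, by apply Complex.ext <;> simp [him]⟩
  have hreal : -(f t) ^ 2 / (κ : ℂ) = ((-r ^ 2 / κ : ℝ) : ℂ) := by
    rw [hr]; push_cast; ring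
  -- compute the derivative
  have hd1 := hasDerivAt_trace_mul (fun i j => hρd i j t) (fun i j => hρd i j t)
  have hd2 := hasDerivAt_trace_mul (fun i j => hρ i j t) (fun i j => hρd i j t)
  have hVfun : V = fun s => (ρd s * ρd s).trace - (ρ s * ρd s).trace := funext hV
  have hDer := (hd1.sub hd2)
  have hE : ((-Complex.I • (H₀ * ρd t - ρd t * H₀)) * ρd t).trace
      + (ρd t * (-Complex.I • (H₀ * ρd t - ρd t * H₀))).trace
      - (((-Complex.I • ((H₀ + f t • H₁) * ρ t - ρ t * (H₀ + f t • H₁))) * ρd t).trace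
          + (ρ t * (-Complex.I • (H₀ * ρd t - ρd t * H₀))).trace)
      = -(f t) ^ 2 / (κ : ℂ) := by
    set P := ρ t; set D := ρd t; set c := f t with hc
    have h1 : (D * H₀ * D).trace = (H₀ * D * D).trace := by rw [tr3 H₀ D D]
    have h2 : (D * D * H₀).trace = (H₀ * D * D).trace := by rw [tr3 D D H₀]
    have h3 : (P * D * H₀).trace = (H₀ * P * D).trace := by rw [tr3 P D H₀]
    have h4 : (D * (H₁ * P)).trace = (H₁ * P * D).trace := by rw [trace_mul_comm]
    have h5 : (D * (P * H₁)).trace = (P * H₁ * D).trace := by rw [trace_mul_comm]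
    have hcc : c = (κ : ℂ) * (-Complex.I) * ((H₁ * P * D).trace - (P * H₁ * D).trace) := by
      rw [hc, hf]
      simp only [Matrix.mul_smul, Matrix.mul_sub, Matrix.trace_smul, Matrix.trace_sub,
        smul_eq_mul, h4, h5]
      rw [show ρd t = D from rfl, show ρ t = P from rfl, h4, h5]
      ring
    simp only [Matrix.smul_mul, Matrix.mul_smul, Matrix.add_mul, Matrix.mul_add,
      Matrix.sub_mul, Matrix.mul_sub, Matrix.smul_mul, Matrix.trace_add, Matrix.trace_sub,
      Matrix.trace_smul, smul_eq_mul, ← mul_assoc, h1, h2, h3]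
    field_simp
    linear_combination c * hcc
  refine ⟨?_, ?_, ?_⟩
  · rw [hVfun]; exact hE ▸ hDer
  · rw [hreal]; exact Complex.ofReal_im _
  · rw [hreal]
    simp only [Complex.ofReal_re]
    apply div_nonpos_of_nonpos_of_nonneg
    · simpa using sq_nonneg r
    · exact hκ.le
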